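/- In the MAX-3-SAT shopping instance, from any purchase plan with total discount k' one can construct a truth assignment satisfying at least k' − 2n clauses of φ. -/

import Mathlib

/-- MAX-3-SAT reduction, soundness direction: from any purchase plan of total
discount `k'` one can construct a truth assignment satisfying at least
`k' - 2n` clauses (stated as `k' ≤ 2n + #satisfied clauses`). -/
theorem stmt_13 {n m : ℕ} (clauses : Fin m → Fin 3 → Fin n × Bool)
    (hlit : ∀ (v : Fin n) (sgn : Bool),
      (Finset.univ.filter (fun p : Fin m × Fin 3 => clauses p.1 p.2 = (v, sgn))).card = 2) :
    let Book := (Fin m × Fin 3) ⊕ Fin n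
    let Shop := Fin m ⊕ (Fin n × Bool)
    let sells : Shop → Book → Prop := fun s b =>
      match s, b with
      | .inl i, .inl (i', _) => i' = i
      | .inl _, .inr _ => False
      | .inr (v, sgn), .inl (i, j) => clauses i j = (v, sgn)
      | .inr (v, _), .inr v' => v' = v
    let dshop : Shop → ℕ := Sum.elim (fun _ => 1) (fun _ => 2)
    let tshop : Shop → ℕ := Sum.elim (fun _ => 1) (fun _ => 3)
    ∀ g : Book → Shop, (∀ b, sells (g b) b) →
      ∃ τ : Fin n → Bool,
        ∑ s ∈ Finset.univ.filter
            (fun s : Shop =>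
              tshop s ≤ (Finset.univ.filter (fun b : Book => g b = s)).card),
          dshop s
          ≤ 2 * n + (Finset.univ.filter
              (fun i : Fin m => ∃ j : Fin 3, τ (clauses i j).1 = (clauses i j).2)).card := by
  classical
  intro Book Shop sells dshop tshop g hg
  -- counting function
  let cnt : Shop → ℕ := fun s => (Finset.univ.filter (fun b : Book => g b = s)).card
  -- books assigned to a variable shop are among the two occurrences and the variable book
  have hsub : ∀ (v : Fin n) (sgn : Bool),
      (Finset.univ.filter (fun b : Book => g b = Sum.inr (v, sgn))) ⊆
      insert (Sum.inr v : Book)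
        ((Finset.univ.filter
          (fun p : Fin m × Fin 3 => clauses p.1 p.2 = (v, sgn))).image (Sum.inl : Fin m × Fin 3 → Book)) := by
    intro v sgn b hb
    simp only [Finset.mem_filter, Finset.mem_univ, true_and] at hb
    have hs := hg b
    rw [hb] at hs
    match b with
    | Sum.inl p =>
      simp only [Finset.mem_insert, Finset.mem_image, Finset.mem_filter, Finset.mem_univ,
        true_and]
      exact Or.inr ⟨p, hs, rfl⟩
    | Sum.inr v' =>
      have hvv : v' = v := hs
      subst hvv
      exact Finset.mem_insert_self _ _
  have hTcard : ∀ (v : Fin n) (sgn : Bool),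
      (insert (Sum.inr v : Book)
        ((Finset.univ.filter
          (fun p : Fin m × Fin 3 => clauses p.1 p.2 = (v, sgn))).image (Sum.inl : Fin m × Fin 3 → Book))).card ≤ 3 := by
    intro v sgn
    calc _ ≤ ((Finset.univ.filter
          (fun p : Fin m × Fin 3 => clauses p.1 p.2 = (v, sgn))).image (Sum.inl : Fin m × Fin 3 → Book)).card + 1 :=
        Finset.card_insert_le _ _
      _ ≤ (Finset.univ.filter
          (fun p : Fin m × Fin 3 => clauses p.1 p.2 = (v, sgn))).card + 1 :=
        Nat.add_le_add_right (Finset.card_image_le) 1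
      _ ≤ 3 := by rw [hlit v sgn]
  -- a saturated variable shop gets the variable book
  have hforce : ∀ (v : Fin n) (sgn : Bool), 3 ≤ cnt (Sum.inr (v, sgn)) →
      g (Sum.inr v) = Sum.inr (v, sgn) := by
    intro v sgn h
    have heq := Finset.eq_of_subset_of_card_le (hsub v sgn) (le_trans (hTcard v sgn) h)
    have hmem : (Sum.inr v : Book) ∈
        Finset.univ.filter (fun b : Book => g b = Sum.inr (v, sgn)) := by
      rw [heq]; exact Finset.mem_insert_self _ _
    simpa using hmem
  -- at most one of the two shops of a variable is saturated
  have hatmost : ∀ v : Fin n,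
      ¬ 3 ≤ cnt (Sum.inr (v, true)) ∨ ¬ 3 ≤ cnt (Sum.inr (v, false)) := by
    intro v
    by_contra hc
    push_neg at hc
    have h1 := hforce v true hc.1
    have h2 := hforce v false hc.2
    rw [h1] at h2
    exact Bool.noConfusion (congrArg Prod.snd (Sum.inr_injective h2))
  -- if a literal occurrence is bought at its clause shop, the literal's shop is unsaturated
  have hexcl : ∀ (i : Fin m) (j : Fin 3) (v : Fin n) (sgn : Bool),
      clauses i j = (v, sgn) → g (Sum.inl (i, j)) = Sum.inl i →
      ¬ 3 ≤ cnt (Sum.inr (v, sgn)) := by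
    intro i j v sgn hc hgij hcontra
    have hmemT : (Sum.inl (i, j) : Book) ∈
        ((Finset.univ.filter
          (fun p : Fin m × Fin 3 => clauses p.1 p.2 = (v, sgn))).image (Sum.inl : Fin m × Fin 3 → Book)) := by
      simp only [Finset.mem_image, Finset.mem_filter, Finset.mem_univ, true_and]
      exact ⟨(i, j), hc, rfl⟩
    have hsub2 : (Finset.univ.filter (fun b : Book => g b = Sum.inr (v, sgn))) ⊆
        (insert (Sum.inr v : Book)
          ((Finset.univ.filter
            (fun p : Fin m × Fin 3 => clauses p.1 p.2 = (v, sgn))).image (Sum.inl : Fin m × Fin 3 → Book))).erase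
          (Sum.inl (i, j)) := by
      intro b hb
      refine Finset.mem_erase.mpr ⟨?_, hsub v sgn hb⟩
      rintro rfl
      simp only [Finset.mem_filter, Finset.mem_univ, true_and] at hb
      rw [hgij] at hb
      exact Sum.inl_ne_inr hb
    have hcard2 := Finset.card_le_card hsub2
    rw [Finset.card_erase_of_mem (Finset.mem_insert_of_mem hmemT)] at hcard2
    have hT := hTcard v sgn
    have hcnteq : cnt (Sum.inr (v, sgn))
        = (Finset.univ.filter (fun b : Book => g b = Sum.inr (v, sgn))).card := rfl
    omega
  -- the assignment
  refine ⟨fun v => if 3 ≤ cnt (Sum.inr (v, true)) then false else true, ?_⟩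
  set τ : Fin n → Bool := fun v => if 3 ≤ cnt (Sum.inr (v, true)) then false else true with hτdef
  have hτ : ∀ (v : Fin n) (sgn : Bool), 3 ≤ cnt (Sum.inr (v, sgn)) → τ v = !sgn := by
    intro v sgn h
    cases sgn with
    | true => simp [hτdef, h]
    | false =>
      have : ¬ 3 ≤ cnt (Sum.inr (v, true)) := by
        rcases hatmost v with h' | h'
        · exact h'
        · exact absurd h h'
      simp [hτdef, this]
  -- named finsets
  set A : Finset (Fin n) := Finset.univ.filter
      (fun v => 3 ≤ cnt (Sum.inr (v, true)) ∨ 3 ≤ cnt (Sum.inr (v, false))) with hAdef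
  set B : Finset (Fin n) := Finset.univ.filter
      (fun v => ¬ (3 ≤ cnt (Sum.inr (v, true)) ∨ 3 ≤ cnt (Sum.inr (v, false)))) with hBdef
  set SC : Finset (Fin m) := Finset.univ.filter (fun i => 1 ≤ cnt (Sum.inl i)) with hSCdef
  set SatC : Finset (Fin m) := Finset.univ.filter
      (fun i => ∃ j : Fin 3, τ (clauses i j).1 = (clauses i j).2) with hSatCdef
  have hAB : A.card + B.card = n := by
    rw [hAdef, hBdef, Finset.card_filter_add_card_filter_not, Finset.card_univ,
      Fintype.card_fin]
  -- a saturated clause shop has a literal occurrence bought there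
  have hwit : ∀ i : Fin m, 1 ≤ cnt (Sum.inl i) → ∃ j, g (Sum.inl (i, j)) = Sum.inl i := by
    intro i hi
    have : (Finset.univ.filter (fun b : Book => g b = Sum.inl i)).Nonempty :=
      Finset.card_pos.mp hi
    obtain ⟨b, hb⟩ := this
    simp only [Finset.mem_filter, Finset.mem_univ, true_and] at hb
    have hs := hg b
    rw [hb] at hs
    match b with
    | Sum.inl p =>
      have hpi : p.1 = i := hs
      exact ⟨p.2, by rw [← hpi] at hb ⊢; exact hb⟩
    | Sum.inr v' => exact absurd hs (by simp [sells])
  -- the wrong-literal occurrences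
  set W : Finset (Fin m × Fin 3) := B.biUnion
      (fun v => Finset.univ.filter
        (fun p : Fin m × Fin 3 => clauses p.1 p.2 = (v, !τ v))) with hWdef
  have hWcard : W.card = 2 * B.card := by
    rw [hWdef, Finset.card_biUnion]
    · rw [Finset.sum_congr rfl (fun v _ => hlit v (!τ v))]
      rw [Finset.sum_const, smul_eq_mul, mul_comm]
    · intro v hv v' hv' hne
      rw [Function.onFun, Finset.disjoint_left]
      intro p hp hp'
      simp only [Finset.mem_filter, Finset.mem_univ, true_and] at hp hp'
      rw [hp] at hp'
      exact hne (congrArg Prod.fst hp')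
  -- the injection
  have hinj : (SC \ SatC).card ≤ W.card := by
    apply Finset.card_le_card_of_injOn
      (fun i => (i, if h : ∃ j, g (Sum.inl (i, j)) = Sum.inl i then h.choose else (0 : Fin 3)))
    · intro i hi
      rw [Finset.mem_coe, Finset.mem_sdiff] at hi
      obtain ⟨hi1, hi2⟩ := hi
      rw [hSCdef, Finset.mem_filter] at hi1
      have hex : ∃ j, g (Sum.inl (i, j)) = Sum.inl i := hwit i hi1.2
      simp only [dif_pos hex]
      have hj : g (Sum.inl (i, hex.choose)) = Sum.inl i := hex.choose_spec
      set j := hex.choose with hjdef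
      rcases hcij : clauses i j with ⟨v, sgn⟩
      have hne : τ v ≠ sgn := by
        intro hcontra
        refine hi2 (by rw [hSatCdef, Finset.mem_filter]
                       exact ⟨Finset.mem_univ _, ⟨j, by rw [hcij]; exact hcontra⟩⟩)
      have h1 : ¬ 3 ≤ cnt (Sum.inr (v, sgn)) := hexcl i j v sgn hcij hj
      have h2 : ¬ 3 ≤ cnt (Sum.inr (v, !sgn)) := by
        intro hcontra
        have h3 := hτ v (!sgn) hcontra
        rw [Bool.not_not] at h3
        exact hne h3
      have hvB : v ∈ B := by
        rw [hBdef, Finset.mem_filter]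
        refine ⟨Finset.mem_univ _, ?_⟩
        rintro (h | h) <;> cases sgn <;> first | exact h1 h | exact h2 h
      rw [hWdef, Finset.mem_coe, Finset.mem_biUnion]
      refine ⟨v, hvB, ?_⟩
      simp only [Finset.mem_filter, Finset.mem_univ, true_and]
      rw [hcij]
      have hsgn : sgn = !τ v := by
        cases sgn with
        | false => rw [eq_true_of_ne_false hne]; rfl
        | true => rw [eq_false_of_ne_true hne]; rfl
      rw [hsgn]
    · intro i _ i' _ h
      exact congrArg Prod.fst h
  have hSCcard : SC.card ≤ SatC.card + 2 * B.card := by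
    calc SC.card ≤ (SC \ SatC).card + SatC.card := Finset.card_le_card_sdiff_add_card
      _ ≤ W.card + SatC.card := Nat.add_le_add_right hinj _
      _ = SatC.card + 2 * B.card := by rw [hWcard]; omega
  -- split the discount sum
  have hsplit : ∑ s ∈ Finset.univ.filter (fun s : Shop => tshop s ≤ cnt s), dshop s
      = (∑ i : Fin m, if 1 ≤ cnt (Sum.inl i) then 1 else 0)
        + ∑ p : Fin n × Bool, if 3 ≤ cnt (Sum.inr p) then 2 else 0 := by
    rw [Finset.sum_filter, Fintype.sum_sum_type]
    congr 1
  have hfirst : (∑ i : Fin m, if 1 ≤ cnt (Sum.inl i) then 1 else 0) = SC.card := by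
    rw [hSCdef, ← Finset.sum_filter, Finset.sum_const, smul_eq_mul, mul_one]
  have hsecond : (∑ p : Fin n × Bool, if 3 ≤ cnt (Sum.inr p) then 2 else 0) ≤ 2 * A.card := by
    rw [Fintype.sum_prod_type]
    have hbound : ∀ v : Fin n,
        (∑ sgn : Bool, if 3 ≤ cnt (Sum.inr (v, sgn)) then 2 else 0)
          ≤ if v ∈ A then 2 else 0 := by
      intro v
      rw [Fintype.sum_bool]
      by_cases hA : v ∈ A
      · rw [if_pos hA]
        rcases hatmost v with h | h
        · rw [if_neg h]
          split <;> omega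
        · rw [if_neg h]
          split <;> omega
      · have hnA : ¬ (3 ≤ cnt (Sum.inr (v, true))) ∧ ¬ (3 ≤ cnt (Sum.inr (v, false))) := by
          rw [← not_or]
          intro hor
          exact hA (by rw [hAdef, Finset.mem_filter]; exact ⟨Finset.mem_univ _, hor⟩)
        rw [if_neg hnA.1, if_neg hnA.2, if_neg hA]
    calc (∑ v : Fin n, ∑ sgn : Bool, if 3 ≤ cnt (Sum.inr (v, sgn)) then 2 else 0)
        ≤ ∑ v : Fin n, if v ∈ A then 2 else 0 :=
          Finset.sum_le_sum (fun v _ => hbound v)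
      _ = 2 * A.card := by
          rw [Finset.sum_ite_mem, Finset.univ_inter, Finset.sum_const, smul_eq_mul, mul_comm]
  calc ∑ s ∈ Finset.univ.filter
          (fun s : Shop => tshop s ≤ (Finset.univ.filter (fun b : Book => g b = s)).card),
        dshop s
      = (∑ i : Fin m, if 1 ≤ cnt (Sum.inl i) then 1 else 0)
        + ∑ p : Fin n × Bool, if 3 ≤ cnt (Sum.inr p) then 2 else 0 := hsplit
    _ = SC.card + ∑ p : Fin n × Bool, (if 3 ≤ cnt (Sum.inr p) then 2 else 0) := by
        rw [hfirst]
    _ ≤ SC.card + 2 * A.card := Nat.add_le_add_left hsecond _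
    _ ≤ (SatC.card + 2 * B.card) + 2 * A.card := Nat.add_le_add_right hSCcard _
    _ ≤ 2 * n + SatC.card := by omega
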